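/- Suppose E[ξ²] < ∞ and set γ := (2σ² + 2μ²)^{1/2}/σ². Then for every n ≥ 1 and all A, B ∈ M_n(ℂ): ⦀AB⦀_{X,2} ≤ γ · ⦀A⦀_{X,2} · ⦀B⦀_{X,2} (so γ⦀·⦀_{X,2} is a submultiplicative norm on M_n(ℂ) with γ independent of n); moreover ⦀UAU^*⦀_{X,2} = ⦀A⦀_{X,2} for every n×n unitary matrix U and every Hermitian A ∈ M_n(ℂ). -/

import Mathlib

open MeasureTheory ProbabilityTheory Matrix

/-- The norm `‖A‖_{X,d}` on Hermitian matrices induced by the random vector `X`: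
`(E[|Σ_i X_i λ_i|^d] / Γ(d+1))^(1/d)`, where `λ` is the eigenvalue vector of `A`. -/
noncomputable def hermNormXd {Ω : Type} [MeasurableSpace Ω] (P : Measure Ω)
    {n : ℕ} (X : Fin n → Ω → ℝ) (d : ℝ) (A : Matrix (Fin n) (Fin n) ℂ) : ℝ :=
  if hA : A.IsHermitian then
    ((∫ ω, |∑ i, X i ω * hA.eigenvalues i| ^ d ∂P) / Real.Gamma (d + 1)) ^ (1 / d)
  else 0

/-- The norm `⦀Z⦀_{X,d}` on all of `M_n(ℂ)`:
`((1/(2π b_d)) ∫_0^{2π} ‖e^{it}Z + e^{-it}Z^*‖_{X,d}^d dt)^(1/d)` with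
`b_d = Γ(d+1)/Γ(d/2+1)^2`, so `1/(2π b_d) = Γ(d/2+1)^2/(2π Γ(d+1))`. -/
noncomputable def matNormXd {Ω : Type} [MeasurableSpace Ω] (P : Measure Ω)
    {n : ℕ} (X : Fin n → Ω → ℝ) (d : ℝ) (Z : Matrix (Fin n) (Fin n) ℂ) : ℝ :=
  ((Real.Gamma (d / 2 + 1) ^ 2 / (2 * Real.pi * Real.Gamma (d + 1))) *
    ∫ t in (0:ℝ)..(2 * Real.pi),
      hermNormXd P X d (Complex.exp (↑t * Complex.I) • Z +
        Complex.exp (-(↑t * Complex.I)) • Zᴴ) ^ d) ^ (1 / d)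


noncomputable def qN (σ μ : ℝ) {n : ℕ} (Z : Matrix (Fin n) (Fin n) ℂ) : ℝ :=
  (σ ^ 2 * ∑ i, ∑ j, Complex.normSq (Z i j) + μ ^ 2 * Complex.normSq Z.trace) / 2

lemma qN_nonneg (σ μ : ℝ) {n : ℕ} (Z : Matrix (Fin n) (Fin n) ℂ) : 0 ≤ qN σ μ Z := by
  have h1 : (0:ℝ) ≤ ∑ i, ∑ j, Complex.normSq (Z i j) :=
    Finset.sum_nonneg fun i _ => Finset.sum_nonneg fun j _ => Complex.normSq_nonneg _
  have h2 := Complex.normSq_nonneg Z.trace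
  unfold qN
  positivity

lemma herm_trace {n : ℕ} {A : Matrix (Fin n) (Fin n) ℂ} (hA : A.IsHermitian) :
    A.trace = ((∑ i, hA.eigenvalues i : ℝ) : ℂ) := by
  conv_lhs => rw [hA.spectral_theorem, Unitary.conjStarAlgAut_apply]
  rw [Matrix.trace_mul_cycle,
    (Matrix.mem_unitaryGroup_iff').mp (hA.eigenvectorUnitary).2, Matrix.one_mul,
    Matrix.trace_diagonal]
  push_cast
  rfl

lemma trace_conjTranspose_mul (n : ℕ) (A : Matrix (Fin n) (Fin n) ℂ) :
    (Aᴴ * A).trace = ((∑ i, ∑ j, Complex.normSq (A i j) : ℝ) : ℂ) := by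
  push_cast
  rw [Matrix.trace, Finset.sum_comm]
  refine Finset.sum_congr rfl fun i _ => ?_
  simp only [Matrix.diag_apply, Matrix.mul_apply, Matrix.conjTranspose_apply]
  refine Finset.sum_congr rfl fun j _ => ?_
  rw [Complex.normSq_eq_conj_mul_self]; rfl

lemma herm_sq {n : ℕ} {A : Matrix (Fin n) (Fin n) ℂ} (hA : A.IsHermitian) :
    ∑ i, hA.eigenvalues i ^ 2 = ∑ i, ∑ j, Complex.normSq (A i j) := by
  have key : (Aᴴ * A).trace = ((∑ i, hA.eigenvalues i ^ 2 : ℝ) : ℂ) := by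
    conv_lhs => rw [hA.eq, hA.spectral_theorem, Unitary.conjStarAlgAut_apply]
    rw [show ∀ (U D V : Matrix (Fin n) (Fin n) ℂ), (U * D * V) * (U * D * V)
        = U * (D * (V * U) * D) * V from fun U D V => by noncomm_ring,
      (Matrix.mem_unitaryGroup_iff').mp (hA.eigenvectorUnitary).2, Matrix.mul_one,
      Matrix.trace_mul_cycle,
      (Matrix.mem_unitaryGroup_iff').mp (hA.eigenvectorUnitary).2, Matrix.one_mul,
      Matrix.diagonal_mul_diagonal, Matrix.trace_diagonal]
    push_cast
    simp [sq]
  have := key.symm.trans (trace_conjTranspose_mul n A)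
  exact_mod_cast this

lemma second_moment
    {Ω : Type} [MeasurableSpace Ω] (P : Measure Ω) [IsProbabilityMeasure P]
    (ξ : Ω → ℝ) (hmeas : Measurable ξ) (hmom : Integrable (fun ω => ξ ω ^ 2) P)
    {n : ℕ} (X : Fin n → Ω → ℝ) (hXm : ∀ i, Measurable (X i))
    (hind : iIndepFun X P)
    (hid : ∀ i, IdentDistrib (X i) ξ P P) (c : Fin n → ℝ) :
    ∫ ω, (∑ i, X i ω * c i) ^ 2 ∂P
      = (∫ ω, ξ ω ^ 2 ∂P - (∫ ω, ξ ω ∂P) ^ 2) * ∑ i, c i ^ 2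
        + (∫ ω, ξ ω ∂P) ^ 2 * (∑ i, c i) ^ 2 := by
  set μ0 := ∫ ω, ξ ω ∂P with hμ0
  set m2 := ∫ ω, ξ ω ^ 2 ∂P with hm2
  have hint : Integrable ξ P := by
    refine (Integrable.mono ((integrable_const (1:ℝ)).add hmom)
      hmeas.aestronglyMeasurable ?_)
    filter_upwards with ω
    simp only [Pi.add_apply, Real.norm_eq_abs]
    have h1 : |ξ ω| ≤ 1 + ξ ω ^ 2 := by nlinarith [sq_nonneg (|ξ ω| - 1), sq_abs (ξ ω)]
    calc |ξ ω| ≤ 1 + ξ ω ^ 2 := h1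
      _ ≤ |1 + ξ ω ^ 2| := le_abs_self _
  have hXint : ∀ i, Integrable (X i) P := fun i => ((hid i).integrable_iff).mpr hint
  have hid2 : ∀ i, IdentDistrib (fun ω => X i ω ^ 2) (fun ω => ξ ω ^ 2) P P := fun i =>
    (hid i).comp (measurable_id.pow_const 2)
  have hX2int : ∀ i, Integrable (fun ω => X i ω ^ 2) P := fun i =>
    ((hid2 i).integrable_iff).mpr hmom
  have hXmean : ∀ i, ∫ ω, X i ω ∂P = μ0 := fun i => (hid i).integral_eq
  have hX2mean : ∀ i, ∫ ω, X i ω ^ 2 ∂P = m2 := fun i => (hid2 i).integral_eq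
  have base : ∀ i j, Integrable (fun ω => X i ω * X j ω) P := by
    intro i j
    by_cases h : i = j
    · subst h
      have := hX2int i
      simpa [sq] using this
    · exact (hind.indepFun h).integrable_mul (hXint i) (hXint j)
  have hval : ∀ i j, ∫ ω, X i ω * X j ω ∂P = if i = j then m2 else μ0 ^ 2 := by
    intro i j
    by_cases h : i = j
    · subst h
      simp only [if_pos rfl]
      rw [← hX2mean i]
      congr 1 with ω
      ring
    · rw [if_neg h]
      calc ∫ ω, X i ω * X j ω ∂P = (∫ ω, X i ω ∂P) * ∫ ω, X j ω ∂P :=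
            (hind.indepFun h).integral_fun_mul_eq_mul_integral (hXint i).1 (hXint j).1
        _ = μ0 ^ 2 := by rw [hXmean i, hXmean j, sq]
  have hInt : ∀ i j, Integrable (fun ω => (X i ω * c i) * (X j ω * c j)) P := by
    intro i j
    have : (fun ω => (X i ω * c i) * (X j ω * c j))
        = fun ω => (c i * c j) * (X i ω * X j ω) := by funext ω; ring
    rw [this]
    exact (base i j).const_mul _
  have step1 : ∫ ω, (∑ i, X i ω * c i) ^ 2 ∂P
      = ∑ i, ∑ j, (c i * c j) * (if i = j then m2 else μ0 ^ 2) := by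
    have expand : ∀ ω, (∑ i, X i ω * c i) ^ 2
        = ∑ i, ∑ j, (X i ω * c i) * (X j ω * c j) := by
      intro ω; rw [sq, Finset.sum_mul_sum]
    simp_rw [expand]
    rw [integral_finset_sum _ (fun i _ => integrable_finset_sum _ (fun j _ => hInt i j))]
    refine Finset.sum_congr rfl fun i _ => ?_
    rw [integral_finset_sum _ (fun j _ => hInt i j)]
    refine Finset.sum_congr rfl fun j _ => ?_
    have : (fun ω => (X i ω * c i) * (X j ω * c j))
        = fun ω => (c i * c j) * (X i ω * X j ω) := by funext ω; ring
    rw [this, integral_const_mul, hval]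
  rw [step1]
  have per_i : ∀ i, ∑ j, (c i * c j) * (if i = j then m2 else μ0 ^ 2)
      = (∑ j, c i * (c j * μ0 ^ 2)) + c i ^ 2 * (m2 - μ0 ^ 2) := by
    intro i
    calc ∑ j, (c i * c j) * (if i = j then m2 else μ0 ^ 2)
        = ∑ j, (c i * (c j * μ0 ^ 2)
            + (if i = j then c i * c j * (m2 - μ0 ^ 2) else 0)) := by
          refine Finset.sum_congr rfl fun j _ => ?_
          by_cases h : i = j
          · subst h; rw [if_pos rfl, if_pos rfl]; ring
          · rw [if_neg h, if_neg h]; ring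
      _ = (∑ j, c i * (c j * μ0 ^ 2))
            + ∑ j, (if i = j then c i * c j * (m2 - μ0 ^ 2) else 0) :=
          Finset.sum_add_distrib
      _ = (∑ j, c i * (c j * μ0 ^ 2)) + c i ^ 2 * (m2 - μ0 ^ 2) := by
          rw [Finset.sum_ite_eq Finset.univ i (fun j => c i * c j * (m2 - μ0 ^ 2))]
          simp [sq]
  calc ∑ i, ∑ j, (c i * c j) * (if i = j then m2 else μ0 ^ 2)
      = ∑ i, ((∑ j, c i * (c j * μ0 ^ 2)) + c i ^ 2 * (m2 - μ0 ^ 2)) :=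
        Finset.sum_congr rfl fun i _ => per_i i
    _ = (∑ i, ∑ j, c i * (c j * μ0 ^ 2)) + ∑ i, c i ^ 2 * (m2 - μ0 ^ 2) :=
        Finset.sum_add_distrib
    _ = (∑ i, c i) * (∑ j, c j * μ0 ^ 2) + (∑ i, c i ^ 2) * (m2 - μ0 ^ 2) := by
        rw [Finset.sum_mul_sum, Finset.sum_mul]
    _ = (m2 - μ0 ^ 2) * ∑ i, c i ^ 2 + μ0 ^ 2 * (∑ i, c i) ^ 2 := by
        rw [← Finset.sum_mul]
        ring

lemma hermN_eq
    {Ω : Type} [MeasurableSpace Ω] (P : Measure Ω) [IsProbabilityMeasure P]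
    (ξ : Ω → ℝ) (hmeas : Measurable ξ) (hmom : Integrable (fun ω => ξ ω ^ 2) P)
    (μ σ : ℝ) (hμ : μ = ∫ ω, ξ ω ∂P)
    (hσ : σ = Real.sqrt (∫ ω, (ξ ω - μ) ^ 2 ∂P))
    {n : ℕ} (X : Fin n → Ω → ℝ) (hXm : ∀ i, Measurable (X i))
    (hind : iIndepFun X P)
    (hid : ∀ i, IdentDistrib (X i) ξ P P)
    (A : Matrix (Fin n) (Fin n) ℂ) (hA : A.IsHermitian) :
    hermNormXd P X 2 A = Real.sqrt (qN σ μ A) := by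
  have hint : Integrable ξ P := by
    refine (Integrable.mono ((integrable_const (1:ℝ)).add hmom)
      hmeas.aestronglyMeasurable ?_)
    filter_upwards with ω
    simp only [Pi.add_apply, Real.norm_eq_abs]
    have h1 : |ξ ω| ≤ 1 + ξ ω ^ 2 := by nlinarith [sq_nonneg (|ξ ω| - 1), sq_abs (ξ ω)]
    calc |ξ ω| ≤ 1 + ξ ω ^ 2 := h1
      _ ≤ |1 + ξ ω ^ 2| := le_abs_self _
  have hvar : σ ^ 2 = ∫ ω, ξ ω ^ 2 ∂P - μ ^ 2 := by
    have hnn : 0 ≤ ∫ ω, (ξ ω - μ) ^ 2 ∂P := integral_nonneg fun ω => sq_nonneg _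
    rw [hσ, Real.sq_sqrt hnn]
    have hexp : ∀ ω, (ξ ω - μ) ^ 2 = ξ ω ^ 2 - (2 * μ) * ξ ω + μ ^ 2 := fun ω => by ring
    simp_rw [hexp]
    have I1 : Integrable (fun ω => ξ ω ^ 2 - 2 * μ * ξ ω) P :=
      hmom.sub (hint.const_mul (2 * μ))
    rw [integral_add I1 (integrable_const _),
      integral_sub hmom (hint.const_mul (2 * μ)), integral_const_mul, integral_const]
    simp only [measure_univ, ENNReal.toReal_one, smul_eq_mul, one_mul, probReal_univ, mul_one]
    rw [← hμ]
    ring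
  have key := second_moment P ξ hmeas hmom X hXm hind hid (fun i => hA.eigenvalues i)
  rw [hermNormXd, dif_pos hA]
  have habs : ∀ s : ℝ, |s| ^ (2:ℝ) = s ^ 2 := fun s => by
    rw [show (2:ℝ) = ((2:ℕ):ℝ) by norm_num, Real.rpow_natCast, sq_abs]
  simp_rw [habs]
  have hΓ : Real.Gamma ((2:ℝ) + 1) = 2 := by
    rw [show ((2:ℝ) + 1) = ((2:ℕ):ℝ) + 1 by norm_num, Real.Gamma_nat_eq_factorial]
    norm_num
  have htr : (∑ i, hA.eigenvalues i) ^ 2 = Complex.normSq A.trace := by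
    rw [herm_trace hA, Complex.normSq_ofReal, sq]
  rw [key, ← hμ, ← hvar, herm_sq hA, htr, hΓ, Real.sqrt_eq_rpow]
  rfl

open Complex in
lemma entry_normSq (t : ℝ) (a b : ℂ) :
    Complex.normSq (Complex.exp (↑t * Complex.I) * a + Complex.exp (-(↑t * Complex.I)) * b)
      = Complex.normSq a + Complex.normSq b
        + 2 * (Complex.exp (↑(2 * t) * Complex.I) * (a * (starRingEnd ℂ) b)).re := by
  rw [Complex.normSq_add]
  have h1 : Complex.normSq (Complex.exp (↑t * Complex.I) * a) = Complex.normSq a := by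
    rw [Complex.normSq_mul, Complex.normSq_eq_norm_sq, Complex.norm_exp_ofReal_mul_I]
    norm_num
  have h2 : Complex.normSq (Complex.exp (-(↑t * Complex.I)) * b) = Complex.normSq b := by
    rw [Complex.normSq_mul, Complex.normSq_eq_norm_sq,
      show -(↑t * Complex.I) = ↑(-t) * Complex.I by push_cast; ring,
      Complex.norm_exp_ofReal_mul_I]
    norm_num
  have h3 : (Complex.exp (↑t * Complex.I) * a) *
        (starRingEnd ℂ) (Complex.exp (-(↑t * Complex.I)) * b)
      = Complex.exp (↑(2 * t) * Complex.I) * (a * (starRingEnd ℂ) b) := by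
    rw [_root_.map_mul, ← Complex.exp_conj,
      show (starRingEnd ℂ) (-(↑t * Complex.I)) = ↑t * Complex.I by simp,
      show (↑(2 * t) : ℂ) * Complex.I = ↑t * Complex.I + ↑t * Complex.I by push_cast; ring,
      Complex.exp_add]
    ring
  rw [h1, h2, h3]

lemma qN_Ht (σ μ t : ℝ) {n : ℕ} (Z : Matrix (Fin n) (Fin n) ℂ) :
    qN σ μ (Complex.exp (↑t * Complex.I) • Z + Complex.exp (-(↑t * Complex.I)) • Zᴴ)
      = 2 * qN σ μ Z + (Complex.exp (↑(2 * t) * Complex.I) *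
          ((σ ^ 2 : ℝ) * (∑ i, ∑ j, Z i j * Z j i) + (μ ^ 2 : ℝ) * Z.trace ^ 2)).re := by
  have hentry : ∀ i j, Complex.normSq
      ((Complex.exp (↑t * Complex.I) • Z + Complex.exp (-(↑t * Complex.I)) • Zᴴ) i j)
      = Complex.normSq (Z i j) + Complex.normSq (Z j i)
        + 2 * (Complex.exp (↑(2 * t) * Complex.I) * (Z i j * Z j i)).re := by
    intro i j
    rw [Matrix.add_apply, Matrix.smul_apply, Matrix.smul_apply, Matrix.conjTranspose_apply,
      smul_eq_mul, smul_eq_mul]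
    rw [show star (Z j i) = (starRingEnd ℂ) (Z j i) from rfl, entry_normSq]
    rw [Complex.normSq_conj, Complex.conj_conj]
  have htr : Complex.normSq
      ((Complex.exp (↑t * Complex.I) • Z + Complex.exp (-(↑t * Complex.I)) • Zᴴ)).trace
      = 2 * Complex.normSq Z.trace
        + 2 * (Complex.exp (↑(2 * t) * Complex.I) * Z.trace ^ 2).re := by
    rw [Matrix.trace_add, Matrix.trace_smul, Matrix.trace_smul,
      Matrix.trace_conjTranspose, smul_eq_mul, smul_eq_mul,
      show star Z.trace = (starRingEnd ℂ) Z.trace from rfl, entry_normSq,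
      Complex.normSq_conj, Complex.conj_conj, sq]
    ring
  unfold qN
  simp only [hentry, htr]
  generalize Complex.exp ((↑(2 * t) : ℂ) * Complex.I) = E
  have hs1 : ∑ i, ∑ j, (Complex.normSq (Z i j) + Complex.normSq (Z j i)
        + 2 * (E * (Z i j * Z j i)).re)
      = 2 * (∑ i, ∑ j, Complex.normSq (Z i j))
        + 2 * (E * ∑ i, ∑ j, Z i j * Z j i).re := by
    simp_rw [Finset.sum_add_distrib]
    rw [Finset.sum_comm (f := fun i j => Complex.normSq (Z j i))]
    simp_rw [← Finset.mul_sum, ← Complex.re_sum, ← Finset.mul_sum]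
    ring
  rw [hs1,
    show (E * ((σ ^ 2 : ℝ) * (∑ i, ∑ j, Z i j * Z j i) + (μ ^ 2 : ℝ) * Z.trace ^ 2))
        = (σ ^ 2 : ℝ) * (E * ∑ i, ∑ j, Z i j * Z j i)
          + (μ ^ 2 : ℝ) * (E * Z.trace ^ 2) by ring,
    Complex.add_re, Complex.re_ofReal_mul, Complex.re_ofReal_mul]
  ring

lemma cos_two_integral : ∫ t in (0:ℝ)..(2 * Real.pi), Real.cos (2 * t) = 0 := by
  rw [intervalIntegral.integral_comp_mul_left (fun x => Real.cos x) two_ne_zero]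
  simp only [mul_zero, integral_cos, smul_eq_mul]
  rw [show (2:ℝ) * (2 * Real.pi) = (4:ℕ) * Real.pi by push_cast; ring,
    Real.sin_nat_mul_pi]
  simp

lemma sin_two_integral : ∫ t in (0:ℝ)..(2 * Real.pi), Real.sin (2 * t) = 0 := by
  rw [intervalIntegral.integral_comp_mul_left (fun x => Real.sin x) two_ne_zero]
  simp only [mul_zero, integral_sin, smul_eq_mul]
  rw [show (2:ℝ) * (2 * Real.pi) = (2:ℕ) * (2 * Real.pi) by push_cast; ring,
    Real.cos_nat_mul_two_pi]
  simp

lemma osc_integral (w : ℂ) :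
    (∫ t in (0:ℝ)..(2 * Real.pi), (Complex.exp (↑(2 * t) * Complex.I) * w).re) = 0 := by
  have h : ∀ t : ℝ, (Complex.exp (↑(2 * t) * Complex.I) * w).re
      = w.re * Real.cos (2 * t) - w.im * Real.sin (2 * t) := by
    intro t
    rw [Complex.mul_re, Complex.exp_ofReal_mul_I_re, Complex.exp_ofReal_mul_I_im]
    ring
  simp_rw [h]
  have hc : IntervalIntegrable (fun t => w.re * Real.cos (2 * t)) MeasureTheory.volume 0 (2 * Real.pi) :=
    (Continuous.intervalIntegrable (by continuity) _ _)
  have hs : IntervalIntegrable (fun t => w.im * Real.sin (2 * t)) MeasureTheory.volume 0 (2 * Real.pi) :=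
    (Continuous.intervalIntegrable (by continuity) _ _)
  rw [intervalIntegral.integral_sub hc hs, intervalIntegral.integral_const_mul,
    intervalIntegral.integral_const_mul, cos_two_integral, sin_two_integral]
  ring

lemma herm_t {n : ℕ} (t : ℝ) (Z : Matrix (Fin n) (Fin n) ℂ) :
    (Complex.exp (↑t * Complex.I) • Z + Complex.exp (-(↑t * Complex.I)) • Zᴴ).IsHermitian := by
  unfold Matrix.IsHermitian
  rw [Matrix.conjTranspose_add, Matrix.conjTranspose_smul, Matrix.conjTranspose_smul,
    Matrix.conjTranspose_conjTranspose,
    show star (Complex.exp (↑t * Complex.I)) = Complex.exp (-(↑t * Complex.I)) by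
      rw [show star (Complex.exp (↑t * Complex.I))
          = (starRingEnd ℂ) (Complex.exp (↑t * Complex.I)) from rfl, ← Complex.exp_conj]
      congr 1; simp,
    show star (Complex.exp (-(↑t * Complex.I))) = Complex.exp (↑t * Complex.I) by
      rw [show star (Complex.exp (-(↑t * Complex.I)))
          = (starRingEnd ℂ) (Complex.exp (-(↑t * Complex.I))) from rfl, ← Complex.exp_conj]
      congr 1; simp]
  exact add_comm _ _

lemma matN_eq
    {Ω : Type} [MeasurableSpace Ω] (P : Measure Ω) [IsProbabilityMeasure P]
    (ξ : Ω → ℝ) (hmeas : Measurable ξ) (hmom : Integrable (fun ω => ξ ω ^ 2) P)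
    (μ σ : ℝ) (hμ : μ = ∫ ω, ξ ω ∂P)
    (hσ : σ = Real.sqrt (∫ ω, (ξ ω - μ) ^ 2 ∂P))
    {n : ℕ} (X : Fin n → Ω → ℝ) (hXm : ∀ i, Measurable (X i))
    (hind : iIndepFun X P)
    (hid : ∀ i, IdentDistrib (X i) ξ P P)
    (Z : Matrix (Fin n) (Fin n) ℂ) :
    matNormXd P X 2 Z = Real.sqrt (qN σ μ Z) := by
  unfold matNormXd
  set w : ℂ := (σ ^ 2 : ℝ) * (∑ i, ∑ j, Z i j * Z j i) + (μ ^ 2 : ℝ) * Z.trace ^ 2 with hw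
  have h1 : ∀ t : ℝ, hermNormXd P X 2 (Complex.exp (↑t * Complex.I) • Z
        + Complex.exp (-(↑t * Complex.I)) • Zᴴ) ^ (2:ℝ)
      = 2 * qN σ μ Z + (Complex.exp (↑(2 * t) * Complex.I) * w).re := by
    intro t
    have hsq : ∀ x : ℝ, 0 ≤ x → Real.sqrt x ^ (2:ℝ) = x := fun x hx => by
      rw [show (2:ℝ) = ((2:ℕ):ℝ) by norm_num, Real.rpow_natCast, Real.sq_sqrt hx]
    rw [hermN_eq P ξ hmeas hmom μ σ hμ hσ X hXm hind hid _ (herm_t t Z),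
      hsq _ (qN_nonneg _ _ _), qN_Ht]
  simp_rw [h1]
  have hosc : IntervalIntegrable (fun t => (Complex.exp (↑(2 * t) * Complex.I) * w).re)
      MeasureTheory.volume 0 (2 * Real.pi) := by
    apply Continuous.intervalIntegrable
    fun_prop
  rw [intervalIntegral.integral_add (intervalIntegrable_const) hosc,
    intervalIntegral.integral_const, osc_integral]
  have hΓ2 : Real.Gamma ((2:ℝ)/2 + 1) = 1 := by
    rw [show ((2:ℝ)/2 + 1) = ((1:ℕ):ℝ) + 1 by norm_num, Real.Gamma_nat_eq_factorial]
    norm_num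
  have hΓ3 : Real.Gamma ((2:ℝ) + 1) = 2 := by
    rw [show ((2:ℝ) + 1) = ((2:ℕ):ℝ) + 1 by norm_num, Real.Gamma_nat_eq_factorial]
    norm_num
  rw [hΓ2, hΓ3, Real.sqrt_eq_rpow]
  congr 1
  rw [smul_eq_mul]
  have hπ := Real.pi_ne_zero
  field_simp
  ring

lemma cs_normSq {ι : Type*} (s : Finset ι) (u v : ι → ℂ) :
    Complex.normSq (∑ i ∈ s, u i * v i)
      ≤ (∑ i ∈ s, Complex.normSq (u i)) * (∑ i ∈ s, Complex.normSq (v i)) := by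
  have h1 : ‖∑ i ∈ s, u i * v i‖
      ≤ ∑ i ∈ s, ‖u i‖ * ‖v i‖ := by
    refine (norm_sum_le _ _).trans ?_
    exact le_of_eq (Finset.sum_congr rfl fun i _ => norm_mul _ _)
  have h2 : (∑ i ∈ s, ‖u i‖ * ‖v i‖) ^ 2
      ≤ (∑ i ∈ s, ‖u i‖ ^ 2) * (∑ i ∈ s, ‖v i‖ ^ 2) :=
    Finset.sum_mul_sq_le_sq_mul_sq s _ _
  calc Complex.normSq (∑ i ∈ s, u i * v i)
      = ‖∑ i ∈ s, u i * v i‖ ^ 2 := (Complex.sq_norm _).symm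
    _ ≤ (∑ i ∈ s, ‖u i‖ * ‖v i‖) ^ 2 := by
        apply pow_le_pow_left₀ (norm_nonneg _) h1
    _ ≤ (∑ i ∈ s, ‖u i‖ ^ 2) * (∑ i ∈ s, ‖v i‖ ^ 2) := h2
    _ = _ := by simp_rw [Complex.sq_norm]

lemma F_mul_le {n : ℕ} (A B : Matrix (Fin n) (Fin n) ℂ) :
    (∑ i, ∑ j, Complex.normSq ((A * B) i j))
      ≤ (∑ i, ∑ j, Complex.normSq (A i j)) * (∑ i, ∑ j, Complex.normSq (B i j)) := by
  calc (∑ i, ∑ j, Complex.normSq ((A * B) i j))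
      ≤ ∑ i, ∑ k, (∑ j, Complex.normSq (A i j)) * (∑ j, Complex.normSq (B j k)) := by
        refine Finset.sum_le_sum fun i _ => Finset.sum_le_sum fun k _ => ?_
        rw [Matrix.mul_apply]
        exact cs_normSq Finset.univ _ _
    _ = (∑ i, ∑ j, Complex.normSq (A i j)) * (∑ k, ∑ j, Complex.normSq (B j k)) := by
        rw [← Finset.sum_mul_sum]
    _ = _ := by rw [Finset.sum_comm (f := fun k j => Complex.normSq (B j k))]

lemma T_mul_le {n : ℕ} (A B : Matrix (Fin n) (Fin n) ℂ) :
    Complex.normSq ((A * B).trace)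
      ≤ (∑ i, ∑ j, Complex.normSq (A i j)) * (∑ i, ∑ j, Complex.normSq (B i j)) := by
  have htr : (A * B).trace = ∑ p : Fin n × Fin n, A p.1 p.2 * B p.2 p.1 := by
    rw [Fintype.sum_prod_type]
    simp [Matrix.trace, Matrix.diag, Matrix.mul_apply]
  rw [htr]
  refine (cs_normSq Finset.univ _ _).trans (le_of_eq ?_)
  congr 1
  · rw [Fintype.sum_prod_type]
  · rw [Fintype.sum_prod_type]
    show (∑ x : Fin n, ∑ y : Fin n, Complex.normSq (B y x)) = _
    exact Finset.sum_comm

lemma qN_unitary {n : ℕ} (σ μ : ℝ) (U : Matrix (Fin n) (Fin n) ℂ)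
    (hU : U ∈ Matrix.unitaryGroup (Fin n) ℂ) (A : Matrix (Fin n) (Fin n) ℂ) :
    qN σ μ (U * A * Uᴴ) = qN σ μ A := by
  have hU1 : Uᴴ * U = 1 := by
    rw [← Matrix.star_eq_conjTranspose]
    exact (Matrix.mem_unitaryGroup_iff').mp hU
  have hF : (∑ i, ∑ j, Complex.normSq ((U * A * Uᴴ) i j))
      = ∑ i, ∑ j, Complex.normSq (A i j) := by
    have e1 := trace_conjTranspose_mul n (U * A * Uᴴ)
    have e2 : ((U * A * Uᴴ)ᴴ * (U * A * Uᴴ)) = U * (Aᴴ * A) * Uᴴ := by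
      rw [Matrix.conjTranspose_mul, Matrix.conjTranspose_mul,
        Matrix.conjTranspose_conjTranspose]
      calc U * (Aᴴ * Uᴴ) * (U * A * Uᴴ) = U * (Aᴴ * ((Uᴴ * U) * A)) * Uᴴ := by
            noncomm_ring
        _ = U * (Aᴴ * A) * Uᴴ := by rw [hU1, Matrix.one_mul]
    rw [e2] at e1
    rw [Matrix.trace_mul_cycle, hU1, Matrix.one_mul,
      trace_conjTranspose_mul n A] at e1
    exact_mod_cast e1.symm
  have hT : (U * A * Uᴴ).trace = A.trace := by
    rw [Matrix.trace_mul_cycle, hU1, Matrix.one_mul]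
  unfold qN
  rw [hF, hT]

lemma key_ineq (σ μ γ fa fb ta tb fab tab : ℝ)
    (hγσ : γ ^ 2 * σ ^ 4 = 2 * σ ^ 2 + 2 * μ ^ 2)
    (h1 : fab ≤ fa * fb) (h2 : tab ≤ fa * fb)
    (hfa0 : 0 ≤ fa) (hfb0 : 0 ≤ fb) (hta0 : 0 ≤ ta) (htb0 : 0 ≤ tb) :
    (σ ^ 2 * fab + μ ^ 2 * tab) / 2
      ≤ γ ^ 2 * ((σ ^ 2 * fa + μ ^ 2 * ta) / 2) * ((σ ^ 2 * fb + μ ^ 2 * tb) / 2) := by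
  have hγ20 : (0:ℝ) ≤ γ ^ 2 := sq_nonneg γ
  have hQA : σ ^ 2 * fa / 2 ≤ (σ ^ 2 * fa + μ ^ 2 * ta) / 2 := by
    nlinarith [mul_nonneg (sq_nonneg μ) hta0]
  have hQB : σ ^ 2 * fb / 2 ≤ (σ ^ 2 * fb + μ ^ 2 * tb) / 2 := by
    nlinarith [mul_nonneg (sq_nonneg μ) htb0]
  have hQA0 : (0:ℝ) ≤ σ ^ 2 * fa / 2 :=
    div_nonneg (mul_nonneg (sq_nonneg σ) hfa0) (by norm_num)
  have hQB0 : (0:ℝ) ≤ σ ^ 2 * fb / 2 :=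
    div_nonneg (mul_nonneg (sq_nonneg σ) hfb0) (by norm_num)
  calc (σ ^ 2 * fab + μ ^ 2 * tab) / 2
      ≤ (σ ^ 2 + μ ^ 2) * (fa * fb) / 2 := by
        nlinarith [mul_le_mul_of_nonneg_left h1 (sq_nonneg σ),
          mul_le_mul_of_nonneg_left h2 (sq_nonneg μ)]
    _ = γ ^ 2 * (σ ^ 2 * fa / 2) * (σ ^ 2 * fb / 2) := by
        have e : γ ^ 2 * (σ ^ 2 * fa / 2) * (σ ^ 2 * fb / 2)
            = (γ ^ 2 * σ ^ 4) * (fa * fb) / 4 := by ring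
        rw [e, hγσ]
        ring
    _ ≤ γ ^ 2 * ((σ ^ 2 * fa + μ ^ 2 * ta) / 2) * ((σ ^ 2 * fb + μ ^ 2 * tb) / 2) := by
        refine mul_le_mul (mul_le_mul_of_nonneg_left hQA hγ20) hQB hQB0 ?_
        exact mul_nonneg hγ20 (hQA0.trans hQA)

set_option maxHeartbeats 1600000 in
/-- If `E[ξ²] < ∞` and `γ = √(2σ² + 2μ²)/σ²`, then for every `n ≥ 1`
and all `A, B ∈ M_n(ℂ)` we have `⦀AB⦀_{X,2} ≤ γ ⦀A⦀_{X,2} ⦀B⦀_{X,2}`, and moreover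
`⦀UAU^*⦀_{X,2} = ⦀A⦀_{X,2}` for every unitary `U` and Hermitian `A`. -/
theorem d_two_submultiplicative_and_weakly_unitarily_invariant
    {Ω : Type} [MeasurableSpace Ω] (P : Measure Ω) [IsProbabilityMeasure P]
    (ξ : Ω → ℝ) (hmeas : Measurable ξ)
    (hnd : ¬ ∃ c : ℝ, ∀ᵐ ω ∂P, ξ ω = c)
    (hmom : Integrable (fun ω => ξ ω ^ 2) P)
    (μ σ γ : ℝ) (hμ : μ = ∫ ω, ξ ω ∂P)
    (hσ : σ = Real.sqrt (∫ ω, (ξ ω - μ) ^ 2 ∂P))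
    (hγ : γ = Real.sqrt (2 * σ ^ 2 + 2 * μ ^ 2) / σ ^ 2) :
    ∀ n : ℕ, 1 ≤ n → ∀ X : Fin n → Ω → ℝ,
      (∀ i, Measurable (X i)) →
      iIndepFun X P →
      (∀ i, IdentDistrib (X i) ξ P P) →
      (∀ A B : Matrix (Fin n) (Fin n) ℂ,
        matNormXd P X 2 (A * B) ≤ γ * matNormXd P X 2 A * matNormXd P X 2 B) ∧
      (∀ U : Matrix (Fin n) (Fin n) ℂ, U ∈ Matrix.unitaryGroup (Fin n) ℂ →
        ∀ A : Matrix (Fin n) (Fin n) ℂ, A.IsHermitian →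
          matNormXd P X 2 (U * A * Uᴴ) = matNormXd P X 2 A) := by
  intro n hn X hXm hind hid
  have hint : Integrable ξ P := by
    refine (Integrable.mono ((integrable_const (1:ℝ)).add hmom)
      hmeas.aestronglyMeasurable ?_)
    filter_upwards with ω
    simp only [Pi.add_apply, Real.norm_eq_abs]
    have h1 : |ξ ω| ≤ 1 + ξ ω ^ 2 := by nlinarith [sq_nonneg (|ξ ω| - 1), sq_abs (ξ ω)]
    calc |ξ ω| ≤ 1 + ξ ω ^ 2 := h1
      _ ≤ |1 + ξ ω ^ 2| := le_abs_self _
  have hσnn : 0 ≤ σ := hσ ▸ Real.sqrt_nonneg _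
  have hσpos : 0 < σ := by
    rcases lt_or_eq_of_le hσnn with h | h
    · exact h
    · exfalso
      apply hnd
      refine ⟨μ, ?_⟩
      have hVnn : 0 ≤ ∫ ω, (ξ ω - μ) ^ 2 ∂P := integral_nonneg fun ω => sq_nonneg _
      have hV : ∫ ω, (ξ ω - μ) ^ 2 ∂P = 0 :=
        (Real.sqrt_eq_zero hVnn).mp (hσ ▸ h.symm)
      have hIvar : Integrable (fun ω => (ξ ω - μ) ^ 2) P := by
        refine ((hmom.sub (hint.const_mul (2 * μ))).add
          (integrable_const (μ ^ 2))).congr ?_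
        filter_upwards with ω
        simp only [Pi.add_apply, Pi.sub_apply]
        ring
      have hae := (integral_eq_zero_iff_of_nonneg (fun ω => sq_nonneg _) hIvar).mp hV
      filter_upwards [hae] with ω hω
      have hω' : (ξ ω - μ) ^ 2 = 0 := hω
      have := pow_eq_zero_iff (n := 2) (by norm_num) |>.mp hω'
      linarith [sub_eq_zero.mp this]
  have hγnn : 0 ≤ γ := hγ ▸ div_nonneg (Real.sqrt_nonneg _) (sq_nonneg σ)
  have hγσ : γ ^ 2 * σ ^ 4 = 2 * σ ^ 2 + 2 * μ ^ 2 := by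
    rw [hγ, div_pow, Real.sq_sqrt (by positivity),
      show ((σ ^ 2) ^ 2 : ℝ) = σ ^ 4 by ring,
      div_mul_cancel₀ _ (by positivity : (σ:ℝ) ^ 4 ≠ 0)]
  constructor
  · intro A B
    rw [matN_eq P ξ hmeas hmom μ σ hμ hσ X hXm hind hid (A * B),
      matN_eq P ξ hmeas hmom μ σ hμ hσ X hXm hind hid A,
      matN_eq P ξ hmeas hmom μ σ hμ hσ X hXm hind hid B]
    have key : qN σ μ (A * B) ≤ γ ^ 2 * qN σ μ A * qN σ μ B := by
      have hfa0 : (0:ℝ) ≤ ∑ i, ∑ j, Complex.normSq (A i j) :=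
        Finset.sum_nonneg fun i _ => Finset.sum_nonneg fun j _ => Complex.normSq_nonneg _
      have hfb0 : (0:ℝ) ≤ ∑ i, ∑ j, Complex.normSq (B i j) :=
        Finset.sum_nonneg fun i _ => Finset.sum_nonneg fun j _ => Complex.normSq_nonneg _
      exact key_ineq σ μ γ _ _ _ _ _ _ hγσ (F_mul_le A B) (T_mul_le A B)
        hfa0 hfb0 (Complex.normSq_nonneg A.trace) (Complex.normSq_nonneg B.trace)
    calc Real.sqrt (qN σ μ (A * B))
        ≤ Real.sqrt (γ ^ 2 * qN σ μ A * qN σ μ B) := Real.sqrt_le_sqrt key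
      _ = γ * Real.sqrt (qN σ μ A) * Real.sqrt (qN σ μ B) := by
          rw [Real.sqrt_mul (mul_nonneg (sq_nonneg γ) (qN_nonneg σ μ A)) _,
            Real.sqrt_mul (sq_nonneg γ) _, Real.sqrt_sq hγnn]
  · intro U hU A _hA
    rw [matN_eq P ξ hmeas hmom μ σ hμ hσ X hXm hind hid (U * A * Uᴴ),
      matN_eq P ξ hmeas hmom μ σ hμ hσ X hXm hind hid A,
      qN_unitary σ μ U hU A]
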